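/- Let f(u) = (-1)^{n₁+n₂-n₁n₂} · (u²-1)^{-(n₁-2)(n₂-2)} / (u⁴-1)^{n₁+n₂-2} for integers n₁, n₂ ≥ 1. Then f(1/u) = (-1)^{n₁+n₂-n₁n₂} · u^{2n₁n₂} · f(u); i.e., f is an absolute automorphic form of weight -2n₁n₂. -/

import Mathlib

open Complex

theorem stmt_10 (n₁ n₂ : ℕ) (h₁ : 1 ≤ n₁) (h₂ : 1 ≤ n₂)
    (f : ℂ → ℂ)
    (hf : ∀ v : ℂ, f v =
      (-1 : ℂ) ^ ((n₁ : ℤ) + n₂ - n₁ * n₂) *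
        (v ^ 2 - 1) ^ (-(((n₁ : ℤ) - 2) * ((n₂ : ℤ) - 2))) /
        (v ^ 4 - 1) ^ ((n₁ : ℤ) + n₂ - 2))
    (u : ℂ) (hu : u ≠ 0) (h4 : u ^ 4 ≠ 1) :
    f u⁻¹ = (-1 : ℂ) ^ ((n₁ : ℤ) + n₂ - n₁ * n₂) * u ^ (2 * n₁ * n₂) * f u := by
  have ha : u ^ 2 - 1 ≠ 0 := by
    intro h
    apply h4
    have h2 : u ^ 2 = 1 := by linear_combination h
    calc u ^ 4 = (u ^ 2) ^ 2 := by ring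
      _ = 1 := by rw [h2]; ring
  have hb : u ^ 4 - 1 ≠ 0 := sub_ne_zero.mpr h4
  have hm1 : (-1 : ℂ) ≠ 0 := by norm_num
  set A : ℤ := (n₁ : ℤ) + n₂ - n₁ * n₂ with hA
  set B : ℤ := ((n₁ : ℤ) - 2) * ((n₂ : ℤ) - 2) with hB
  set C : ℤ := (n₁ : ℤ) + n₂ - 2 with hC
  rw [hf, hf]
  have e1 : u⁻¹ ^ 2 - 1 = (-1) * (u ^ 2 - 1) * u ^ (-2 : ℤ) := by
    rw [zpow_neg, show ((2:ℤ)) = ((2:ℕ):ℤ) from rfl, zpow_natCast]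
    field_simp
    ring
  have e2 : u⁻¹ ^ 4 - 1 = (-1) * (u ^ 4 - 1) * u ^ (-4 : ℤ) := by
    rw [zpow_neg, show ((4:ℤ)) = ((4:ℕ):ℤ) from rfl, zpow_natCast]
    field_simp
    ring
  rw [e1, e2, mul_zpow, mul_zpow, mul_zpow, mul_zpow, ← zpow_mul, ← zpow_mul,
    div_eq_mul_inv, div_eq_mul_inv, mul_inv, mul_inv, ← zpow_neg, ← zpow_neg, ← zpow_neg,
    ← zpow_natCast u (2 * n₁ * n₂)]
  have h1 : (-1 : ℂ) ^ A * (-1 : ℂ) ^ (-B) * (-1 : ℂ) ^ (-C) = (-1 : ℂ) ^ A * (-1 : ℂ) ^ A := by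
    rw [← zpow_add₀ hm1, ← zpow_add₀ hm1, ← zpow_add₀ hm1]
    have e : Even (A + -B + -C) := ⟨A - 1, by rw [hA, hB, hC]; ring⟩
    have e' : Even (A + A) := ⟨A, rfl⟩
    rw [e.neg_one_zpow, e'.neg_one_zpow]
  have h2 : u ^ (-2 * -B) * u ^ (-(-4 * C)) = u ^ ((2 * n₁ * n₂ : ℕ) : ℤ) := by
    rw [← zpow_add₀ hu]
    congr 1
    rw [hB, hC]
    push_cast
    ring
  calc (-1 : ℂ) ^ A * ((-1 : ℂ) ^ (-B) * (u ^ 2 - 1) ^ (-B) * u ^ (-2 * -B)) *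
        ((-1 : ℂ) ^ (-C) * (u ^ 4 - 1) ^ (-C) * u ^ (-(-4 * C)))
      = ((-1 : ℂ) ^ A * (-1 : ℂ) ^ (-B) * (-1 : ℂ) ^ (-C)) *
        (u ^ (-2 * -B) * u ^ (-(-4 * C))) * ((u ^ 2 - 1) ^ (-B) * (u ^ 4 - 1) ^ (-C)) := by ring
    _ = ((-1 : ℂ) ^ A * (-1 : ℂ) ^ A) * u ^ ((2 * n₁ * n₂ : ℕ) : ℤ) *
        ((u ^ 2 - 1) ^ (-B) * (u ^ 4 - 1) ^ (-C)) := by rw [h1, h2]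
    _ = (-1 : ℂ) ^ A * u ^ ((2 * n₁ * n₂ : ℕ) : ℤ) *
        ((-1 : ℂ) ^ A * (u ^ 2 - 1) ^ (-B) * (u ^ 4 - 1) ^ (-C)) := by ring
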